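/- Let G be a simple bipartite graph with parts A and B, each of size 7, such that the multiset of vertex degrees of A in G is {4,3,3,3,3,3,3} and the multiset of vertex degrees of B in G is {4,3,3,3,3,3,3}. Suppose the unique degree-4 vertex b of A and the unique degree-4 vertex b' of B are adjacent, via the edge e = bb', and suppose that every cycle of length 4 in G contains the edge e. Then the graph G - e obtained by deleting the edge e is isomorphic to the Heawood graph, and the distance between b and b' in G - e equals 3. -/

import Mathlib

open SimpleGraph

/-- The Heawood graph on vertex set `ZMod 14`: distinct vertices `i` and `j` are adjacent
iff `j = i + 1`, or `j = i - 1`, or (`i` is even and `j = i + 5`), or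
(`j` is even and `i = j + 5`), all mod 14. -/
def heawood : SimpleGraph (ZMod 14) where
  Adj i j := i ≠ j ∧ (j = i + 1 ∨ j = i - 1 ∨ (Even i ∧ j = i + 5) ∨ (Even j ∧ i = j + 5))
  symm := by
    refine ⟨?_⟩
    rintro i j ⟨hne, h⟩
    refine ⟨hne.symm, ?_⟩
    rcases h with h | h | h | h
    · right; left; rw [h]; ring
    · left; rw [h]; ring
    · right; right; right; exact h
    · right; right; left; exact h
  loopless := ⟨fun i h => h.1 rfl⟩

instance (i : ZMod 14) : Decidable (Even i) :=
  decidable_of_iff (∃ r : ZMod 14, i = r + r) Iff.rfl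

instance : DecidableRel heawood.Adj := fun i j =>
  inferInstanceAs (Decidable
    (i ≠ j ∧ (j = i + 1 ∨ j = i - 1 ∨ (Even i ∧ j = i + 5) ∨ (Even j ∧ i = j + 5))))

open Finset


lemma deg_eq_three (f : Fin 7 → ℕ) (h : Multiset.map f Finset.univ.val = {4,3,3,3,3,3,3})
    (b : Fin 7) (hb : f b = 4) : ∀ x, x ≠ b → f x = 3 := by
  intro x hx
  have hmem : f x ∈ Multiset.map f Finset.univ.val :=
    Multiset.mem_map_of_mem f (Finset.mem_univ_val _)
  rw [h] at hmem
  have hfx : f x = 4 ∨ f x = 3 := by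
    rcases Multiset.mem_cons.mp hmem with h' | h'
    · exact Or.inl h'
    · right
      rcases Multiset.mem_cons.mp h' with h'|h'
      · exact h'
      rcases Multiset.mem_cons.mp h' with h'|h'
      · exact h'
      rcases Multiset.mem_cons.mp h' with h'|h'
      · exact h'
      rcases Multiset.mem_cons.mp h' with h'|h'
      · exact h'
      rcases Multiset.mem_cons.mp h' with h'|h'
      · exact h'
      exact Multiset.mem_singleton.mp h'
  rcases hfx with h4 | h3
  · exfalso
    have hsub : ({x, b} : Finset (Fin 7)) ⊆ Finset.univ := Finset.subset_univ _
    have hle : ({x, b} : Finset (Fin 7)).val ≤ Finset.univ.val := Finset.val_le_iff.mpr hsub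
    have hmaple : Multiset.map f ({x, b} : Finset (Fin 7)).val ≤ Multiset.map f Finset.univ.val :=
      Multiset.map_le_map hle
    have hxb : ({x, b} : Finset (Fin 7)).val = (x ::ₘ {b} : Multiset (Fin 7)) := by
      rw [Finset.insert_val, Multiset.ndinsert_of_notMem (by simpa using hx)]
      rfl
    have hcount : Multiset.count 4 (Multiset.map f ({x, b} : Finset (Fin 7)).val) = 2 := by
      rw [hxb]
      simp [h4, hb]
    have hcount2 : Multiset.count 4 ({4,3,3,3,3,3,3} : Multiset ℕ) = 1 := by decide
    have := Multiset.count_le_of_le 4 hmaple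
    rw [hcount, h, hcount2] at this
    omega
  · exact h3

lemma four_cycle {V : Type} [DecidableEq V] (G : SimpleGraph V) {a b c d : V}
    (hab : G.Adj a b) (hbc : G.Adj b c) (hcd : G.Adj c d) (hda : G.Adj d a)
    (hac : a ≠ c) (hbd : b ≠ d) :
    ∃ w : G.Walk a a, w.IsCycle ∧ w.length = 4 ∧
      w.edges = [s(a,b), s(b,c), s(c,d), s(d,a)] := by
  refine ⟨.cons hab (.cons hbc (.cons hcd (.cons hda .nil))), ?_, rfl, rfl⟩
  have h1 : a ≠ b := hab.ne
  have h2 : b ≠ c := hbc.ne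
  have h3 : c ≠ d := hcd.ne
  have h4 : d ≠ a := hda.ne
  rw [Walk.isCycle_def, Walk.isTrail_def]
  refine ⟨?_, by simp, ?_⟩
  · simp only [Walk.edges_cons, Walk.edges_nil, List.nodup_cons, List.mem_cons,
      List.not_mem_nil, or_false, List.nodup_nil, and_true, List.mem_singleton]
    simp only [Sym2.eq, Sym2.rel_iff', Prod.mk.injEq, Prod.swap_prod_mk]
    refine ⟨?_, ?_, ?_⟩ <;> push_neg <;> aesop
  · simp only [Walk.support_cons, Walk.support_nil, List.tail_cons, List.nodup_cons,
      List.mem_cons, List.not_mem_nil, or_false, List.nodup_nil, and_true,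
      List.mem_singleton]
    push_neg
    exact ⟨⟨h2, hbd, h1.symm⟩, ⟨h3, hac.symm⟩, ⟨h4, trivial⟩⟩

lemma adj_of_hom_card {V W : Type} [Fintype V] [Fintype W] [DecidableEq V] [DecidableEq W]
    (G1 : SimpleGraph V) (G2 : SimpleGraph W) [DecidableRel G1.Adj] [DecidableRel G2.Adj]
    (f : V ≃ W) (hf : ∀ u v, G1.Adj u v → G2.Adj (f u) (f v))
    (hcard : G2.edgeFinset.card ≤ G1.edgeFinset.card) :
    ∀ u v, G2.Adj (f u) (f v) → G1.Adj u v := by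
  have hinj : Function.Injective (Sym2.map f) := Sym2.map.injective f.injective
  have himage : G1.edgeFinset.image (Sym2.map f) ⊆ G2.edgeFinset := by
    intro e he
    simp only [Finset.mem_image] at he
    obtain ⟨e', he', rfl⟩ := he
    rw [mem_edgeFinset] at he' ⊢
    induction e' using Sym2.ind with
    | _ u v => exact hf u v he'
  have heq : G1.edgeFinset.image (Sym2.map f) = G2.edgeFinset :=
    Finset.eq_of_subset_of_card_le himage
      (by rw [Finset.card_image_of_injective _ hinj]; exact hcard)
  intro u v h2
  have hmem : s(f u, f v) ∈ G2.edgeFinset := by rwa [mem_edgeFinset]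
  rw [← heq, Finset.mem_image] at hmem
  obtain ⟨e', he', hee⟩ := hmem
  have : e' = s(u, v) := hinj (by rw [hee]; rfl)
  subst this
  rwa [mem_edgeFinset] at he'

/-- Let `G` be a bipartite graph with parts of size 7, both of degree multiset
`{4,3,3,3,3,3,3}`, such that the degree-4 vertices `b ∈ A` and `b' ∈ B` are joined by an
edge `e`, and every 4-cycle of `G` contains `e`.  Then `G - e` is isomorphic to the Heawood
graph, and `b` and `b'` are at distance 3 in `G - e`. -/
theorem deleteEdge_iso_heawood (G : SimpleGraph (Fin 7 ⊕ Fin 7)) [DecidableRel G.Adj]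
    (hbip : ∀ x y, G.Adj x y → (x.isLeft ∧ y.isRight) ∨ (x.isRight ∧ y.isLeft))
    (hA : Multiset.map (fun i : Fin 7 => G.degree (Sum.inl i)) Finset.univ.val
      = {4, 3, 3, 3, 3, 3, 3})
    (hB : Multiset.map (fun j : Fin 7 => G.degree (Sum.inr j)) Finset.univ.val
      = {4, 3, 3, 3, 3, 3, 3})
    (b b' : Fin 7)
    (hb : G.degree (Sum.inl b) = 4) (hb' : G.degree (Sum.inr b') = 4)
    (hadj : G.Adj (Sum.inl b) (Sum.inr b'))
    (h4 : ∀ (v : Fin 7 ⊕ Fin 7) (c : G.Walk v v), c.IsCycle → c.length = 4 →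
      s(Sum.inl b, Sum.inr b') ∈ c.edges) :
    Nonempty ((G.deleteEdges {s(Sum.inl b, Sum.inr b')}) ≃g heawood) ∧
      (G.deleteEdges {s(Sum.inl b, Sum.inr b')}).dist (Sum.inl b) (Sum.inr b') = 3 := by
    classical
  set H : SimpleGraph (Fin 7 ⊕ Fin 7) := G.deleteEdges {s(Sum.inl b, Sum.inr b')} with hHdef
  -- basic facts about H
  have hHadj : ∀ u v, H.Adj u v ↔ G.Adj u v ∧ s(u, v) ≠ s(Sum.inl b, Sum.inr b') := by
    intro u v
    rw [hHdef, SimpleGraph.deleteEdges_adj]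
    simp
  have hHG : ∀ u v, H.Adj u v → G.Adj u v := fun u v h => ((hHadj u v).mp h).1
  -- the bipartite adjacency relation of H
  set M : Fin 7 → Fin 7 → Prop := fun i j => H.Adj (Sum.inl i) (Sum.inr j) with hMdef
  have hMG : ∀ i j, M i j ↔ G.Adj (Sum.inl i) (Sum.inr j) ∧ ¬(i = b ∧ j = b') := by
    intro i j
    rw [hMdef]
    simp only [hHadj]
    constructor
    · rintro ⟨h1, h2⟩
      refine ⟨h1, fun ⟨hib, hjb⟩ => h2 (by rw [hib, hjb])⟩
    · rintro ⟨h1, h2⟩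
      refine ⟨h1, fun hs => h2 ?_⟩
      rw [Sym2.eq_iff] at hs
      rcases hs with ⟨h1', h2'⟩ | ⟨h1', h2'⟩
      · exact ⟨Sum.inl.inj h1', Sum.inr.inj h2'⟩
      · simp at h1'
  -- degrees in G
  have hdegA : ∀ i, i ≠ b → G.degree (Sum.inl i) = 3 :=
    fun i hi => deg_eq_three _ hA b hb i hi
  have hdegB : ∀ j, j ≠ b' → G.degree (Sum.inr j) = 3 :=
    fun j hj => deg_eq_three _ hB b' hb' j hj
  have hGArow : ∀ i : Fin 7, (univ.filter (fun j => G.Adj (Sum.inl i) (Sum.inr j))).card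
      = G.degree (Sum.inl i) := by
    intro i
    have hnf : G.neighborFinset (Sum.inl i)
        = (univ.filter (fun j => G.Adj (Sum.inl i) (Sum.inr j))).image Sum.inr := by
      ext v
      cases v with
      | inl k =>
        simp only [mem_neighborFinset, Finset.mem_image, Finset.mem_filter, Finset.mem_univ,
          true_and]
        constructor
        · intro h
          rcases hbip _ _ h with ⟨_, h2⟩ | ⟨h1, _⟩ <;> simp at *
        · rintro ⟨j, _, hj⟩
          exact absurd hj (by simp)
      | inr k => simp [mem_neighborFinset]
    rw [← SimpleGraph.card_neighborFinset_eq_degree, hnf,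
      Finset.card_image_of_injective _ Sum.inr_injective]
  have hGBcol : ∀ j : Fin 7, (univ.filter (fun i => G.Adj (Sum.inl i) (Sum.inr j))).card
      = G.degree (Sum.inr j) := by
    intro j
    have hnf : G.neighborFinset (Sum.inr j)
        = (univ.filter (fun i => G.Adj (Sum.inl i) (Sum.inr j))).image Sum.inl := by
      ext v
      cases v with
      | inr k =>
        simp only [mem_neighborFinset, Finset.mem_image, Finset.mem_filter, Finset.mem_univ,
          true_and]
        constructor
        · intro h
          rcases hbip _ _ h with ⟨h1, _⟩ | ⟨_, h2⟩ <;> simp at *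
        · rintro ⟨i, _, hj⟩
          exact absurd hj (by simp)
      | inl k => simp [mem_neighborFinset, SimpleGraph.adj_comm]
    rw [← SimpleGraph.card_neighborFinset_eq_degree, hnf,
      Finset.card_image_of_injective _ Sum.inl_injective]
  have hMbb' : ¬ M b b' := fun h => ((hMG b b').mp h).2 ⟨rfl, rfl⟩
  have hRow : ∀ i, (univ.filter (fun j => M i j)).card = 3 := by
    intro i
    by_cases hi : i = b
    · have hfe : univ.filter (fun j => M i j)
          = (univ.filter (fun j => G.Adj (Sum.inl i) (Sum.inr j))).erase b' := by
        ext j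
        simp only [Finset.mem_erase, Finset.mem_filter, Finset.mem_univ, true_and]
        constructor
        · intro hm
          obtain ⟨hg, hn⟩ := (hMG i j).mp hm
          exact ⟨fun hjb => hn ⟨hi, hjb⟩, hg⟩
        · rintro ⟨hjb, hg⟩
          exact (hMG i j).mpr ⟨hg, fun hc => hjb hc.2⟩
      rw [hfe, Finset.card_erase_of_mem
        (by simp only [Finset.mem_filter, Finset.mem_univ, true_and]; rw [hi]; exact hadj),
        hGArow, hi, hb]
    · have hfe : univ.filter (fun j => M i j)
          = univ.filter (fun j => G.Adj (Sum.inl i) (Sum.inr j)) := by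
        ext j
        simp only [Finset.mem_filter, Finset.mem_univ, true_and, hMG]
        exact ⟨fun h => h.1, fun h => ⟨h, fun hc => hi hc.1⟩⟩
      rw [hfe, hGArow, hdegA i hi]
  have hCol : ∀ j, (univ.filter (fun i => M i j)).card = 3 := by
    intro j
    by_cases hj : j = b'
    · have hfe : univ.filter (fun i => M i j)
          = (univ.filter (fun i => G.Adj (Sum.inl i) (Sum.inr j))).erase b := by
        ext i
        simp only [Finset.mem_erase, Finset.mem_filter, Finset.mem_univ, true_and]
        constructor
        · intro hm
          obtain ⟨hg, hn⟩ := (hMG i j).mp hm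
          exact ⟨fun hib => hn ⟨hib, hj⟩, hg⟩
        · rintro ⟨hib, hg⟩
          exact (hMG i j).mpr ⟨hg, fun hc => hib hc.1⟩
      rw [hfe, Finset.card_erase_of_mem
        (by simp only [Finset.mem_filter, Finset.mem_univ, true_and]; rw [hj]; exact hadj),
        hGBcol, hj, hb']
    · have hfe : univ.filter (fun i => M i j)
          = univ.filter (fun i => G.Adj (Sum.inl i) (Sum.inr j)) := by
        ext i
        simp only [Finset.mem_filter, Finset.mem_univ, true_and, hMG]
        exact ⟨fun h => h.1, fun h => ⟨h, fun hc => hj hc.2⟩⟩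
      rw [hfe, hGBcol, hdegB j hj]
  -- no 4-cycles in H
  have hL4 : ∀ i i' j j', i ≠ i' → j ≠ j' → M i j → M i' j → M i j' → M i' j' → False := by
    intro i i' j j' hii hjj h1 h2 h3 h5
    obtain ⟨w, hw, hwl, hwe⟩ := four_cycle G (hHG _ _ h1) ((hHG _ _ h2).symm) (hHG _ _ h5)
      ((hHG _ _ h3).symm) (fun hc => hii (Sum.inl.inj hc)) (fun hc => hjj (Sum.inr.inj hc))
    have := h4 _ w hw hwl
    rw [hwe] at this
    have e1 := ((hHadj _ _).mp h1).2
    have e2 := ((hHadj _ _).mp h2).2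
    have e3 := ((hHadj _ _).mp h3).2
    have e5 := ((hHadj _ _).mp h5).2
    simp only [List.mem_cons, List.not_mem_nil, or_false] at this
    rcases this with h' | h' | h' | h'
    · exact e1 h'.symm
    · exact e2 (Sym2.eq_swap.trans h'.symm)
    · exact e5 h'.symm
    · exact e3 (Sym2.eq_swap.trans h'.symm)
  -- row determined by three known members
  have hrow3 : ∀ i p q r, p ≠ q → p ≠ r → q ≠ r → M i p → M i q → M i r →
      ∀ j, M i j → j = p ∨ j = q ∨ j = r := by
    intro i p q r hpq hpr hqr hp hq hr j hj
    have hsub : ({p, q, r} : Finset (Fin 7)) ⊆ univ.filter (fun j => M i j) := by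
      intro x hx
      simp only [Finset.mem_insert, Finset.mem_singleton] at hx
      rcases hx with rfl | rfl | rfl
      · exact Finset.mem_filter.mpr ⟨Finset.mem_univ _, hp⟩
      · exact Finset.mem_filter.mpr ⟨Finset.mem_univ _, hq⟩
      · exact Finset.mem_filter.mpr ⟨Finset.mem_univ _, hr⟩
    have hcard : ({p, q, r} : Finset (Fin 7)).card = 3 := by
      rw [Finset.card_insert_of_notMem (by simp [hpq, hpr]),
        Finset.card_insert_of_notMem (by simp [hqr]), Finset.card_singleton]
    have heq : ({p, q, r} : Finset (Fin 7)) = univ.filter (fun j => M i j) :=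
      Finset.eq_of_subset_of_card_le hsub (by rw [hRow i, hcard])
    have hjm : j ∈ ({p, q, r} : Finset (Fin 7)) := by
      rw [heq]; exact Finset.mem_filter.mpr ⟨Finset.mem_univ _, hj⟩
    simpa using hjm
  -- extract the three neighbours of b
  obtain ⟨j1, j2, j3, hj12, hj13, hj23, hjset⟩ := Finset.card_eq_three.mp (hRow b)
  have hMbj : ∀ j, M b j ↔ (j = j1 ∨ j = j2 ∨ j = j3) := by
    intro j
    have h' : M b j ↔ j ∈ univ.filter (fun j => M b j) :=
      ⟨fun h => Finset.mem_filter.mpr ⟨Finset.mem_univ _, h⟩,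
       fun h => (Finset.mem_filter.mp h).2⟩
    rw [h', hjset]
    simp
  have hMbj1 : M b j1 := (hMbj j1).mpr (Or.inl rfl)
  have hMbj2 : M b j2 := (hMbj j2).mpr (Or.inr (Or.inl rfl))
  have hMbj3 : M b j3 := (hMbj j3).mpr (Or.inr (Or.inr rfl))
  have hb'j1 : b' ≠ j1 := fun h => hMbb' (by rw [h]; exact hMbj1)
  have hb'j2 : b' ≠ j2 := fun h => hMbb' (by rw [h]; exact hMbj2)
  have hb'j3 : b' ≠ j3 := fun h => hMbb' (by rw [h]; exact hMbj3)
  -- groups: the other two neighbours of each j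
  have hgrp : ∀ j, M b j → ∃ x y, x ≠ y ∧ x ≠ b ∧ y ≠ b ∧ M x j ∧ M y j ∧
      (∀ i, M i j → i = b ∨ i = x ∨ i = y) := by
    intro j hbj
    have hc : ((univ.filter (fun i => M i j)).erase b).card = 2 := by
      rw [Finset.card_erase_of_mem
        (by simp only [Finset.mem_filter, Finset.mem_univ, true_and]; exact hbj), hCol]
    obtain ⟨x, y, hxy, hset⟩ := Finset.card_eq_two.mp hc
    have hx : x ∈ (univ.filter (fun i => M i j)).erase b := by rw [hset]; simp
    have hy : y ∈ (univ.filter (fun i => M i j)).erase b := by rw [hset]; simp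
    obtain ⟨hxb, hxm⟩ := Finset.mem_erase.mp hx
    obtain ⟨hyb, hym⟩ := Finset.mem_erase.mp hy
    refine ⟨x, y, hxy, hxb, hyb, (Finset.mem_filter.mp hxm).2, (Finset.mem_filter.mp hym).2, ?_⟩
    intro i hi
    by_cases hib : i = b
    · exact Or.inl hib
    · have hmem : i ∈ ({x, y} : Finset (Fin 7)) := by
        rw [← hset]
        exact Finset.mem_erase.mpr ⟨hib, Finset.mem_filter.mpr ⟨Finset.mem_univ _, hi⟩⟩
      right; simpa using hmem
  obtain ⟨a1, a2, ha12, ha1b, ha2b, hMa1j1, hMa2j1, hgrp1⟩ := hgrp j1 hMbj1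
  obtain ⟨p2, q2, hp2q2, hp2b, hq2b, hMp2j2, hMq2j2, hgrp2⟩ := hgrp j2 hMbj2
  obtain ⟨p3, q3, hp3q3, hp3b, hq3b, hMp3j3, hMq3j3, hgrp3⟩ := hgrp j3 hMbj3
  -- a vertex other than b cannot see two of the j's
  have hne2 : ∀ x, x ≠ b → ∀ jx jy, jx ≠ jy → M b jx → M b jy → M x jx → M x jy → False :=
    fun x hxb jx jy hjxy hbjx hbjy hxjx hxjy =>
      hL4 b x jx jy (fun h => hxb h.symm) hjxy hbjx hxjx hbjy hxjy
  -- cross-group distinctness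
  have ha1p2 : a1 ≠ p2 := fun h =>
    hne2 a1 ha1b j1 j2 hj12 hMbj1 hMbj2 hMa1j1 (by rw [h]; exact hMp2j2)
  have ha1q2 : a1 ≠ q2 := fun h =>
    hne2 a1 ha1b j1 j2 hj12 hMbj1 hMbj2 hMa1j1 (by rw [h]; exact hMq2j2)
  have ha2p2 : a2 ≠ p2 := fun h =>
    hne2 a2 ha2b j1 j2 hj12 hMbj1 hMbj2 hMa2j1 (by rw [h]; exact hMp2j2)
  have ha2q2 : a2 ≠ q2 := fun h =>
    hne2 a2 ha2b j1 j2 hj12 hMbj1 hMbj2 hMa2j1 (by rw [h]; exact hMq2j2)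
  have ha1p3 : a1 ≠ p3 := fun h =>
    hne2 a1 ha1b j1 j3 hj13 hMbj1 hMbj3 hMa1j1 (by rw [h]; exact hMp3j3)
  have ha1q3 : a1 ≠ q3 := fun h =>
    hne2 a1 ha1b j1 j3 hj13 hMbj1 hMbj3 hMa1j1 (by rw [h]; exact hMq3j3)
  have ha2p3 : a2 ≠ p3 := fun h =>
    hne2 a2 ha2b j1 j3 hj13 hMbj1 hMbj3 hMa2j1 (by rw [h]; exact hMp3j3)
  have ha2q3 : a2 ≠ q3 := fun h =>
    hne2 a2 ha2b j1 j3 hj13 hMbj1 hMbj3 hMa2j1 (by rw [h]; exact hMq3j3)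
  have hp2p3 : p2 ≠ p3 := fun h =>
    hne2 p2 hp2b j2 j3 hj23 hMbj2 hMbj3 hMp2j2 (by rw [h]; exact hMp3j3)
  have hp2q3 : p2 ≠ q3 := fun h =>
    hne2 p2 hp2b j2 j3 hj23 hMbj2 hMbj3 hMp2j2 (by rw [h]; exact hMq3j3)
  have hq2p3 : q2 ≠ p3 := fun h =>
    hne2 q2 hq2b j2 j3 hj23 hMbj2 hMbj3 hMq2j2 (by rw [h]; exact hMp3j3)
  have hq2q3 : q2 ≠ q3 := fun h =>
    hne2 q2 hq2b j2 j3 hj23 hMbj2 hMbj3 hMq2j2 (by rw [h]; exact hMq3j3)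
  -- every A-vertex is one of the seven
  have hallA : ∀ i : Fin 7, i = b ∨ i = a1 ∨ i = a2 ∨ i = p2 ∨ i = q2 ∨ i = p3 ∨ i = q3 := by
    intro i
    have hcardA : ({b, a1, a2, p2, q2, p3, q3} : Finset (Fin 7)).card = 7 := by
      rw [Finset.card_insert_of_notMem (by
          simp only [Finset.mem_insert, Finset.mem_singleton]
          push_neg
          exact ⟨fun h => ha1b h.symm, fun h => ha2b h.symm, fun h => hp2b h.symm,
            fun h => hq2b h.symm, fun h => hp3b h.symm, fun h => hq3b h.symm⟩),
        Finset.card_insert_of_notMem (by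
          simp only [Finset.mem_insert, Finset.mem_singleton]
          push_neg
          exact ⟨ha12, ha1p2, ha1q2, ha1p3, ha1q3⟩),
        Finset.card_insert_of_notMem (by
          simp only [Finset.mem_insert, Finset.mem_singleton]
          push_neg
          exact ⟨ha2p2, ha2q2, ha2p3, ha2q3⟩),
        Finset.card_insert_of_notMem (by
          simp only [Finset.mem_insert, Finset.mem_singleton]
          push_neg
          exact ⟨hp2q2, hp2p3, hp2q3⟩),
        Finset.card_insert_of_notMem (by
          simp only [Finset.mem_insert, Finset.mem_singleton]
          push_neg
          exact ⟨hq2p3, hq2q3⟩),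
        Finset.card_insert_of_notMem (by simp [hp3q3]),
        Finset.card_singleton]
    have huniv : ({b, a1, a2, p2, q2, p3, q3} : Finset (Fin 7)) = univ :=
      Finset.eq_univ_of_card _ (by rw [hcardA]; simp)
    have : i ∈ ({b, a1, a2, p2, q2, p3, q3} : Finset (Fin 7)) := by rw [huniv]; simp
    simpa using this
  -- b sees only j1 j2 j3
  have hMbz : ∀ z, z ≠ j1 → z ≠ j2 → z ≠ j3 → ¬ M b z := by
    intro z h1 h2 h3 hm
    rcases (hMbj z).mp hm with rfl | rfl | rfl
    · exact h1 rfl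
    · exact h2 rfl
    · exact h3 rfl
  -- za, zb : the other two neighbours of a1
  have hza : ((univ.filter (fun j => M a1 j)).erase j1).card = 2 := by
    rw [Finset.card_erase_of_mem (Finset.mem_filter.mpr ⟨Finset.mem_univ _, hMa1j1⟩), hRow]
  obtain ⟨za, zb, hzazb, hzaset⟩ := Finset.card_eq_two.mp hza
  have hzam : za ∈ (univ.filter (fun j => M a1 j)).erase j1 := by rw [hzaset]; simp
  have hzbm : zb ∈ (univ.filter (fun j => M a1 j)).erase j1 := by rw [hzaset]; simp
  obtain ⟨hzaj1, hzam2⟩ := Finset.mem_erase.mp hzam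
  obtain ⟨hzbj1, hzbm2⟩ := Finset.mem_erase.mp hzbm
  have hMa1za : M a1 za := (Finset.mem_filter.mp hzam2).2
  have hMa1zb : M a1 zb := (Finset.mem_filter.mp hzbm2).2
  have hrowa1 : ∀ j, M a1 j → j = j1 ∨ j = za ∨ j = zb := by
    intro j hj
    by_cases hjj1 : j = j1
    · exact Or.inl hjj1
    · right
      have hmem : j ∈ ({za, zb} : Finset (Fin 7)) := by
        rw [← hzaset]
        exact Finset.mem_erase.mpr ⟨hjj1, Finset.mem_filter.mpr ⟨Finset.mem_univ _, hj⟩⟩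
      simpa using hmem
  have hzaj2 : za ≠ j2 := fun h =>
    hne2 a1 ha1b j1 j2 hj12 hMbj1 hMbj2 hMa1j1 (by rw [← h]; exact hMa1za)
  have hzaj3 : za ≠ j3 := fun h =>
    hne2 a1 ha1b j1 j3 hj13 hMbj1 hMbj3 hMa1j1 (by rw [← h]; exact hMa1za)
  have hzbj2 : zb ≠ j2 := fun h =>
    hne2 a1 ha1b j1 j2 hj12 hMbj1 hMbj2 hMa1j1 (by rw [← h]; exact hMa1zb)
  have hzbj3 : zb ≠ j3 := fun h =>
    hne2 a1 ha1b j1 j3 hj13 hMbj1 hMbj3 hMa1j1 (by rw [← h]; exact hMa1zb)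
  -- column-count contradiction helper
  have hcard2 : ∀ z p q : Fin 7, ¬ M b z → (∀ i, M i z → i = b ∨ i = p ∨ i = q) → False := by
    intro z p q hbz hsub
    have hsub2 : (univ.filter (fun i => M i z)) ⊆ {p, q} := by
      intro i hi
      have hm := (Finset.mem_filter.mp hi).2
      rcases hsub i hm with rfl | rfl | rfl
      · exact absurd hm hbz
      · simp
      · simp
    have hle := Finset.card_le_card hsub2
    rw [hCol z] at hle
    have h2 : ({p, q} : Finset (Fin 7)).card ≤ 2 :=
      le_trans (Finset.card_insert_le _ _) (by simp)
    omega
  have hone1 : ∀ z, z ≠ j1 → M a1 z → ¬ M a2 z :=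
    fun z h1 hp hq => hL4 a1 a2 j1 z ha12 (Ne.symm h1) hMa1j1 hMa2j1 hp hq
  have hMbza : ¬ M b za := hMbz za hzaj1 hzaj2 hzaj3
  have ha2za : ¬ M a2 za := hone1 za hzaj1 hMa1za
  have hor2 : M p2 za ∨ M q2 za := by
    by_contra hcon
    push_neg at hcon
    obtain ⟨hp2za, hq2za⟩ := hcon
    by_cases hp3za : M p3 za
    · have hq3za : ¬ M q3 za :=
        fun h => hL4 p3 q3 j3 za hp3q3 (Ne.symm hzaj3) hMp3j3 hMq3j3 hp3za h
      refine hcard2 za a1 p3 hMbza (fun i him => ?_)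
      rcases hallA i with rfl | rfl | rfl | rfl | rfl | rfl | rfl
      exacts [Or.inl rfl, Or.inr (Or.inl rfl), absurd him ha2za, absurd him hp2za,
        absurd him hq2za, Or.inr (Or.inr rfl), absurd him hq3za]
    · refine hcard2 za a1 q3 hMbza (fun i him => ?_)
      rcases hallA i with rfl | rfl | rfl | rfl | rfl | rfl | rfl
      exacts [Or.inl rfl, Or.inr (Or.inl rfl), absurd him ha2za, absurd him hp2za,
        absurd him hq2za, absurd him hp3za, Or.inr (Or.inr rfl)]
  have hor3 : M p3 za ∨ M q3 za := by
    by_contra hcon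
    push_neg at hcon
    obtain ⟨hp3za, hq3za⟩ := hcon
    by_cases hp2za : M p2 za
    · have hq2za : ¬ M q2 za :=
        fun h => hL4 p2 q2 j2 za hp2q2 (Ne.symm hzaj2) hMp2j2 hMq2j2 hp2za h
      refine hcard2 za a1 p2 hMbza (fun i him => ?_)
      rcases hallA i with rfl | rfl | rfl | rfl | rfl | rfl | rfl
      exacts [Or.inl rfl, Or.inr (Or.inl rfl), absurd him ha2za, Or.inr (Or.inr rfl),
        absurd him hq2za, absurd him hp3za, absurd him hq3za]
    · refine hcard2 za a1 q2 hMbza (fun i him => ?_)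
      rcases hallA i with rfl | rfl | rfl | rfl | rfl | rfl | rfl
      exacts [Or.inl rfl, Or.inr (Or.inl rfl), absurd him ha2za, absurd him hp2za,
        Or.inr (Or.inr rfl), absurd him hp3za, absurd him hq3za]
  -- orient group 2 so that c1 is adjacent to za
  obtain ⟨c1, c2, hc12, hc1b, hc2b, hMc1j2, hMc2j2, hcset, hMc1za⟩ :
      ∃ c1 c2 : Fin 7, c1 ≠ c2 ∧ c1 ≠ b ∧ c2 ≠ b ∧ M c1 j2 ∧ M c2 j2 ∧
        (∀ i : Fin 7, (i = p2 ∨ i = q2) ↔ (i = c1 ∨ i = c2)) ∧ M c1 za := by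
    rcases hor2 with h | h
    · exact ⟨p2, q2, hp2q2, hp2b, hq2b, hMp2j2, hMq2j2, fun i => Iff.rfl, h⟩
    · exact ⟨q2, p2, hp2q2.symm, hq2b, hp2b, hMq2j2, hMp2j2, fun i => or_comm, h⟩
  obtain ⟨d1, d2, hd12, hd1b, hd2b, hMd1j3, hMd2j3, hdset, hMd1za⟩ :
      ∃ d1 d2 : Fin 7, d1 ≠ d2 ∧ d1 ≠ b ∧ d2 ≠ b ∧ M d1 j3 ∧ M d2 j3 ∧
        (∀ i : Fin 7, (i = p3 ∨ i = q3) ↔ (i = d1 ∨ i = d2)) ∧ M d1 za := by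
    rcases hor3 with h | h
    · exact ⟨p3, q3, hp3q3, hp3b, hq3b, hMp3j3, hMq3j3, fun i => Iff.rfl, h⟩
    · exact ⟨q3, p3, hp3q3.symm, hq3b, hp3b, hMq3j3, hMp3j3, fun i => or_comm, h⟩
  -- oriented completeness facts
  have hallA' : ∀ i : Fin 7, i = b ∨ i = a1 ∨ i = a2 ∨ i = c1 ∨ i = c2 ∨ i = d1 ∨ i = d2 := by
    intro i
    rcases hallA i with rfl | rfl | rfl | h | h | h | h
    · exact Or.inl rfl
    · exact Or.inr (Or.inl rfl)
    · exact Or.inr (Or.inr (Or.inl rfl))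
    · exact Or.inr (Or.inr (Or.inr (((hcset i).mp (Or.inl h)).imp id Or.inl)))
    · exact Or.inr (Or.inr (Or.inr (((hcset i).mp (Or.inr h)).imp id Or.inl)))
    · exact Or.inr (Or.inr (Or.inr (Or.inr (Or.inr ((hdset i).mp (Or.inl h))))))
    · exact Or.inr (Or.inr (Or.inr (Or.inr (Or.inr ((hdset i).mp (Or.inr h))))))
  have hgrp2' : ∀ i, M i j2 → i = b ∨ i = c1 ∨ i = c2 :=
    fun i h => (hgrp2 i h).imp id (hcset i).mp
  have hgrp3' : ∀ i, M i j3 → i = b ∨ i = d1 ∨ i = d2 :=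
    fun i h => (hgrp3 i h).imp id (hdset i).mp
  -- oriented cross-distinctness
  have hc1p : c1 = p2 ∨ c1 = q2 := (hcset c1).mpr (Or.inl rfl)
  have hc2p : c2 = p2 ∨ c2 = q2 := (hcset c2).mpr (Or.inr rfl)
  have hd1p : d1 = p3 ∨ d1 = q3 := (hdset d1).mpr (Or.inl rfl)
  have hd2p : d2 = p3 ∨ d2 = q3 := (hdset d2).mpr (Or.inr rfl)
  have ha1c1 : a1 ≠ c1 := by
    rcases hc1p with h | h <;> rw [h] <;> [exact ha1p2; exact ha1q2]
  have ha1c2 : a1 ≠ c2 := by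
    rcases hc2p with h | h <;> rw [h] <;> [exact ha1p2; exact ha1q2]
  have ha2c1 : a2 ≠ c1 := by
    rcases hc1p with h | h <;> rw [h] <;> [exact ha2p2; exact ha2q2]
  have ha2c2 : a2 ≠ c2 := by
    rcases hc2p with h | h <;> rw [h] <;> [exact ha2p2; exact ha2q2]
  have ha1d1 : a1 ≠ d1 := by
    rcases hd1p with h | h <;> rw [h] <;> [exact ha1p3; exact ha1q3]
  have ha1d2 : a1 ≠ d2 := by
    rcases hd2p with h | h <;> rw [h] <;> [exact ha1p3; exact ha1q3]
  have ha2d1 : a2 ≠ d1 := by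
    rcases hd1p with h | h <;> rw [h] <;> [exact ha2p3; exact ha2q3]
  have ha2d2 : a2 ≠ d2 := by
    rcases hd2p with h | h <;> rw [h] <;> [exact ha2p3; exact ha2q3]
  have hc1d1 : c1 ≠ d1 := by
    rcases hc1p with h | h <;> rcases hd1p with h' | h' <;> rw [h, h'] <;>
      [exact hp2p3; exact hp2q3; exact hq2p3; exact hq2q3]
  have hc1d2 : c1 ≠ d2 := by
    rcases hc1p with h | h <;> rcases hd2p with h' | h' <;> rw [h, h'] <;>
      [exact hp2p3; exact hp2q3; exact hq2p3; exact hq2q3]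
  have hc2d1 : c2 ≠ d1 := by
    rcases hc2p with h | h <;> rcases hd1p with h' | h' <;> rw [h, h'] <;>
      [exact hp2p3; exact hp2q3; exact hq2p3; exact hq2q3]
  have hc2d2 : c2 ≠ d2 := by
    rcases hc2p with h | h <;> rcases hd2p with h' | h' <;> rw [h, h'] <;>
      [exact hp2p3; exact hp2q3; exact hq2p3; exact hq2q3]
  -- one-per-group facts (oriented)
  have honec : ∀ z, z ≠ j2 → M c1 z → ¬ M c2 z :=
    fun z hz h1 h2 => hL4 c1 c2 j2 z hc12 (Ne.symm hz) hMc1j2 hMc2j2 h1 h2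
  have honed : ∀ z, z ≠ j3 → M d1 z → ¬ M d2 z :=
    fun z hz h1 h2 => hL4 d1 d2 j3 z hd12 (Ne.symm hz) hMd1j3 hMd2j3 h1 h2
  -- zc : the third neighbour of c1 (besides j2 and za)
  have hzc1 : (((univ.filter (fun j => M c1 j)).erase j2).erase za).card = 1 := by
    rw [Finset.card_erase_of_mem (Finset.mem_erase.mpr
        ⟨hzaj2, Finset.mem_filter.mpr ⟨Finset.mem_univ _, hMc1za⟩⟩),
      Finset.card_erase_of_mem (Finset.mem_filter.mpr ⟨Finset.mem_univ _, hMc1j2⟩), hRow]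
  obtain ⟨zc, hzcset⟩ := Finset.card_eq_one.mp hzc1
  have hzcm : zc ∈ ((univ.filter (fun j => M c1 j)).erase j2).erase za := by
    rw [hzcset]; simp
  obtain ⟨hzcza, hzcm2⟩ := Finset.mem_erase.mp hzcm
  obtain ⟨hzcj2, hzcm3⟩ := Finset.mem_erase.mp hzcm2
  have hMc1zc : M c1 zc := (Finset.mem_filter.mp hzcm3).2
  have hzcj1 : zc ≠ j1 := fun h =>
    hne2 c1 hc1b j2 j1 (Ne.symm hj12) hMbj2 hMbj1 hMc1j2 (by rw [← h]; exact hMc1zc)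
  have hzcj3 : zc ≠ j3 := fun h =>
    hne2 c1 hc1b j2 j3 hj23 hMbj2 hMbj3 hMc1j2 (by rw [← h]; exact hMc1zc)
  have hzczb : zc ≠ zb := fun h =>
    hL4 a1 c1 za zb ha1c1 hzazb hMa1za hMc1za hMa1zb (by rw [← h]; exact hMc1zc)
  have hrowc1 : ∀ j, M c1 j → j = j2 ∨ j = za ∨ j = zc :=
    hrow3 c1 j2 za zc (Ne.symm hzaj2) (Ne.symm hzcj2) (Ne.symm hzcza) hMc1j2 hMc1za hMc1zc
  -- zd : the third neighbour of d1 (besides j3 and za)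
  have hzd1 : (((univ.filter (fun j => M d1 j)).erase j3).erase za).card = 1 := by
    rw [Finset.card_erase_of_mem (Finset.mem_erase.mpr
        ⟨hzaj3, Finset.mem_filter.mpr ⟨Finset.mem_univ _, hMd1za⟩⟩),
      Finset.card_erase_of_mem (Finset.mem_filter.mpr ⟨Finset.mem_univ _, hMd1j3⟩), hRow]
  obtain ⟨zd, hzdset⟩ := Finset.card_eq_one.mp hzd1
  have hzdm : zd ∈ ((univ.filter (fun j => M d1 j)).erase j3).erase za := by
    rw [hzdset]; simp
  obtain ⟨hzdza, hzdm2⟩ := Finset.mem_erase.mp hzdm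
  obtain ⟨hzdj3, hzdm3⟩ := Finset.mem_erase.mp hzdm2
  have hMd1zd : M d1 zd := (Finset.mem_filter.mp hzdm3).2
  have hzdj1 : zd ≠ j1 := fun h =>
    hne2 d1 hd1b j3 j1 (Ne.symm hj13) hMbj3 hMbj1 hMd1j3 (by rw [← h]; exact hMd1zd)
  have hzdj2 : zd ≠ j2 := fun h =>
    hne2 d1 hd1b j3 j2 (Ne.symm hj23) hMbj3 hMbj2 hMd1j3 (by rw [← h]; exact hMd1zd)
  have hzdzb : zd ≠ zb := fun h =>
    hL4 a1 d1 za zb ha1d1 hzazb hMa1za hMd1za hMa1zb (by rw [← h]; exact hMd1zd)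
  have hzdzc : zd ≠ zc := fun h =>
    hL4 c1 d1 za zc hc1d1 (Ne.symm hzcza) hMc1za hMd1za hMc1zc (by rw [← h]; exact hMd1zd)
  have hrowd1 : ∀ j, M d1 j → j = j3 ∨ j = za ∨ j = zd :=
    hrow3 d1 j3 za zd (Ne.symm hzaj3) (Ne.symm hzdj3) (Ne.symm hzdza) hMd1j3 hMd1za hMd1zd
  -- B-side completeness
  have hallB : ∀ j : Fin 7, j = j1 ∨ j = j2 ∨ j = j3 ∨ j = za ∨ j = zb ∨ j = zc ∨ j = zd := by
    intro j
    have hcardB : ({j1, j2, j3, za, zb, zc, zd} : Finset (Fin 7)).card = 7 := by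
      rw [Finset.card_insert_of_notMem (by
          simp only [Finset.mem_insert, Finset.mem_singleton]
          push_neg
          exact ⟨hj12, hj13, fun h => hzaj1 h.symm, fun h => hzbj1 h.symm,
            fun h => hzcj1 h.symm, fun h => hzdj1 h.symm⟩),
        Finset.card_insert_of_notMem (by
          simp only [Finset.mem_insert, Finset.mem_singleton]
          push_neg
          exact ⟨hj23, fun h => hzaj2 h.symm, fun h => hzbj2 h.symm,
            fun h => hzcj2 h.symm, fun h => hzdj2 h.symm⟩),
        Finset.card_insert_of_notMem (by
          simp only [Finset.mem_insert, Finset.mem_singleton]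
          push_neg
          exact ⟨fun h => hzaj3 h.symm, fun h => hzbj3 h.symm,
            fun h => hzcj3 h.symm, fun h => hzdj3 h.symm⟩),
        Finset.card_insert_of_notMem (by
          simp only [Finset.mem_insert, Finset.mem_singleton]
          push_neg
          exact ⟨hzazb, fun h => hzcza h.symm, fun h => hzdza h.symm⟩),
        Finset.card_insert_of_notMem (by
          simp only [Finset.mem_insert, Finset.mem_singleton]
          push_neg
          exact ⟨fun h => hzczb h.symm, fun h => hzdzb h.symm⟩),
        Finset.card_insert_of_notMem (by
          simp only [Finset.mem_singleton]
          exact fun h => hzdzc h.symm),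
        Finset.card_singleton]
    have huniv : ({j1, j2, j3, za, zb, zc, zd} : Finset (Fin 7)) = univ :=
      Finset.eq_univ_of_card _ (by rw [hcardB]; simp)
    have hmem : j ∈ ({j1, j2, j3, za, zb, zc, zd} : Finset (Fin 7)) := by rw [huniv]; simp
    simpa using hmem
  -- the other two neighbours of a2 are zc and zd
  have hpair : ∀ x jx, M x jx →
      (∀ u, M x u → u ≠ jx → u = zc ∨ u = zd) → M x zc ∧ M x zd := by
    intro x jx hMxjx hclass
    have hxe : ((univ.filter (fun j => M x j)).erase jx).card = 2 := by
      rw [Finset.card_erase_of_mem (Finset.mem_filter.mpr ⟨Finset.mem_univ _, hMxjx⟩), hRow]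
    obtain ⟨u, v, huv, huvset⟩ := Finset.card_eq_two.mp hxe
    have hum : u ∈ (univ.filter (fun j => M x j)).erase jx := by rw [huvset]; simp
    have hvm : v ∈ (univ.filter (fun j => M x j)).erase jx := by rw [huvset]; simp
    obtain ⟨huj, hum2⟩ := Finset.mem_erase.mp hum
    obtain ⟨hvj, hvm2⟩ := Finset.mem_erase.mp hvm
    have hMxu : M x u := (Finset.mem_filter.mp hum2).2
    have hMxv : M x v := (Finset.mem_filter.mp hvm2).2
    rcases hclass u hMxu huj with rfl | rfl <;> rcases hclass v hMxv hvj with rfl | rfl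
    · exact absurd rfl huv
    · exact ⟨hMxu, hMxv⟩
    · exact ⟨hMxv, hMxu⟩
    · exact absurd rfl huv
  have hpair' : ∀ x jx, M x jx →
      (∀ u, M x u → u ≠ jx → u = zb ∨ u = zd) → M x zb ∧ M x zd := by
    intro x jx hMxjx hclass
    have hxe : ((univ.filter (fun j => M x j)).erase jx).card = 2 := by
      rw [Finset.card_erase_of_mem (Finset.mem_filter.mpr ⟨Finset.mem_univ _, hMxjx⟩), hRow]
    obtain ⟨u, v, huv, huvset⟩ := Finset.card_eq_two.mp hxe
    have hum : u ∈ (univ.filter (fun j => M x j)).erase jx := by rw [huvset]; simp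
    have hvm : v ∈ (univ.filter (fun j => M x j)).erase jx := by rw [huvset]; simp
    obtain ⟨huj, hum2⟩ := Finset.mem_erase.mp hum
    obtain ⟨hvj, hvm2⟩ := Finset.mem_erase.mp hvm
    have hMxu : M x u := (Finset.mem_filter.mp hum2).2
    have hMxv : M x v := (Finset.mem_filter.mp hvm2).2
    rcases hclass u hMxu huj with rfl | rfl <;> rcases hclass v hMxv hvj with rfl | rfl
    · exact absurd rfl huv
    · exact ⟨hMxu, hMxv⟩
    · exact ⟨hMxv, hMxu⟩
    · exact absurd rfl huv
  have hpair'' : ∀ x jx, M x jx →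
      (∀ u, M x u → u ≠ jx → u = zb ∨ u = zc) → M x zb ∧ M x zc := by
    intro x jx hMxjx hclass
    have hxe : ((univ.filter (fun j => M x j)).erase jx).card = 2 := by
      rw [Finset.card_erase_of_mem (Finset.mem_filter.mpr ⟨Finset.mem_univ _, hMxjx⟩), hRow]
    obtain ⟨u, v, huv, huvset⟩ := Finset.card_eq_two.mp hxe
    have hum : u ∈ (univ.filter (fun j => M x j)).erase jx := by rw [huvset]; simp
    have hvm : v ∈ (univ.filter (fun j => M x j)).erase jx := by rw [huvset]; simp
    obtain ⟨huj, hum2⟩ := Finset.mem_erase.mp hum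
    obtain ⟨hvj, hvm2⟩ := Finset.mem_erase.mp hvm
    have hMxu : M x u := (Finset.mem_filter.mp hum2).2
    have hMxv : M x v := (Finset.mem_filter.mp hvm2).2
    rcases hclass u hMxu huj with rfl | rfl <;> rcases hclass v hMxv hvj with rfl | rfl
    · exact absurd rfl huv
    · exact ⟨hMxu, hMxv⟩
    · exact ⟨hMxv, hMxu⟩
    · exact absurd rfl huv
  obtain ⟨hMa2zc, hMa2zd⟩ : M a2 zc ∧ M a2 zd := by
    refine hpair a2 j1 hMa2j1 (fun u hu hujx => ?_)
    rcases hallB u with h | h | h | h | h | h | h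
    · exact absurd h hujx
    · rw [h] at hu; exact (hne2 a2 ha2b j1 j2 hj12 hMbj1 hMbj2 hMa2j1 hu).elim
    · rw [h] at hu; exact (hne2 a2 ha2b j1 j3 hj13 hMbj1 hMbj3 hMa2j1 hu).elim
    · rw [h] at hu; exact (ha2za hu).elim
    · rw [h] at hu; exact (hone1 zb hzbj1 hMa1zb hu).elim
    · exact Or.inl h
    · exact Or.inr h
  have hrowa2 : ∀ j, M a2 j → j = j1 ∨ j = zc ∨ j = zd :=
    hrow3 a2 j1 zc zd (Ne.symm hzcj1) (Ne.symm hzdj1) (Ne.symm hzdzc) hMa2j1 hMa2zc hMa2zd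
  obtain ⟨hMc2zb, hMc2zd⟩ : M c2 zb ∧ M c2 zd := by
    refine hpair' c2 j2 hMc2j2 (fun u hu hujx => ?_)
    rcases hallB u with h | h | h | h | h | h | h
    · rw [h] at hu; exact (hne2 c2 hc2b j2 j1 (Ne.symm hj12) hMbj2 hMbj1 hMc2j2 hu).elim
    · exact absurd h hujx
    · rw [h] at hu; exact (hne2 c2 hc2b j2 j3 hj23 hMbj2 hMbj3 hMc2j2 hu).elim
    · rw [h] at hu; exact (honec za hzaj2 hMc1za hu).elim
    · exact Or.inl h
    · rw [h] at hu; exact (honec zc hzcj2 hMc1zc hu).elim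
    · exact Or.inr h
  have hrowc2 : ∀ j, M c2 j → j = j2 ∨ j = zb ∨ j = zd :=
    hrow3 c2 j2 zb zd (Ne.symm hzbj2) (Ne.symm hzdj2) (Ne.symm hzdzb) hMc2j2 hMc2zb hMc2zd
  obtain ⟨hMd2zb, hMd2zc⟩ : M d2 zb ∧ M d2 zc := by
    refine hpair'' d2 j3 hMd2j3 (fun u hu hujx => ?_)
    rcases hallB u with h | h | h | h | h | h | h
    · rw [h] at hu; exact (hne2 d2 hd2b j3 j1 (Ne.symm hj13) hMbj3 hMbj1 hMd2j3 hu).elim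
    · rw [h] at hu; exact (hne2 d2 hd2b j3 j2 (Ne.symm hj23) hMbj3 hMbj2 hMd2j3 hu).elim
    · exact absurd h hujx
    · rw [h] at hu; exact (honed za hzaj3 hMd1za hu).elim
    · exact Or.inl h
    · exact Or.inr h
    · rw [h] at hu; exact (honed zd hzdj3 hMd1zd hu).elim
  have hrowd2 : ∀ j, M d2 j → j = j3 ∨ j = zb ∨ j = zc :=
    hrow3 d2 j3 zb zc (Ne.symm hzbj3) (Ne.symm hzcj3) (Ne.symm hzczb) hMd2j3 hMd2zb hMd2zc
  -- where is b'
  have hb'z : b' = za ∨ b' = zb ∨ b' = zc ∨ b' = zd := by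
    rcases hallB b' with h | h | h | h | h | h | h
    · exact absurd h hb'j1
    · exact absurd h hb'j2
    · exact absurd h hb'j3
    · exact Or.inl h
    · exact Or.inr (Or.inl h)
    · exact Or.inr (Or.inr (Or.inl h))
    · exact Or.inr (Or.inr (Or.inr h))
  -- every vertex of H has degree 3
  have hHdeg : ∀ v, H.degree v = 3 := by
    intro v
    cases v with
    | inl i =>
      have hnf : H.neighborFinset (Sum.inl i) = (univ.filter (fun j => M i j)).image Sum.inr := by
        ext w
        cases w with
        | inl k =>
          simp only [mem_neighborFinset, Finset.mem_image, Finset.mem_filter, Finset.mem_univ,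
            true_and]
          constructor
          · intro h
            exfalso
            rcases hbip _ _ (hHG _ _ h) with ⟨_, h2⟩ | ⟨h1, _⟩
            · exact absurd h2 (by simp)
            · exact absurd h1 (by simp)
          · rintro ⟨j, _, hj⟩
            exact absurd hj (by simp)
        | inr k =>
          simp only [mem_neighborFinset, Finset.mem_image, Finset.mem_filter, Finset.mem_univ,
            true_and]
          constructor
          · intro h
            exact ⟨k, h, rfl⟩
          · rintro ⟨j, hj, hjk⟩
            cases Sum.inr.inj hjk
            exact hj
      rw [← SimpleGraph.card_neighborFinset_eq_degree, hnf,
        Finset.card_image_of_injective _ Sum.inr_injective, hRow]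
    | inr j =>
      have hnf : H.neighborFinset (Sum.inr j) = (univ.filter (fun i => M i j)).image Sum.inl := by
        ext w
        cases w with
        | inr k =>
          simp only [mem_neighborFinset, Finset.mem_image, Finset.mem_filter, Finset.mem_univ,
            true_and]
          constructor
          · intro h
            exfalso
            rcases hbip _ _ (hHG _ _ h) with ⟨h1, _⟩ | ⟨_, h2⟩
            · exact absurd h1 (by simp)
            · exact absurd h2 (by simp)
          · rintro ⟨i, _, hj⟩
            exact absurd hj (by simp)
        | inl k =>
          simp only [mem_neighborFinset, Finset.mem_image, Finset.mem_filter, Finset.mem_univ,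
            true_and]
          constructor
          · intro h
            exact ⟨k, h.symm, rfl⟩
          · rintro ⟨i, hi, hik⟩
            cases Sum.inl.inj hik
            exact (SimpleGraph.Adj.symm hi)
      rw [← SimpleGraph.card_neighborFinset_eq_degree, hnf,
        Finset.card_image_of_injective _ Sum.inl_injective, hCol]
  -- edge counts
  have hHcard : H.edgeFinset.card = 21 := by
    have hsum := H.sum_degrees_eq_twice_card_edges
    rw [Fintype.sum_sum_type] at hsum
    simp only [hHdeg, Finset.sum_const, Finset.card_univ, smul_eq_mul] at hsum
    simp only [Fintype.card_fin] at hsum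
    omega
  have hheadeg : ∀ v, heawood.degree v = 3 := by decide
  have hheacard : heawood.edgeFinset.card = 21 := by
    have hsum := heawood.sum_degrees_eq_twice_card_edges
    have h42 : ∑ v, heawood.degree v = 42 := by
      rw [Finset.sum_congr rfl (fun v _ => hheadeg v), Finset.sum_const, Finset.card_univ]
      simp [ZMod.card]
    rw [h42] at hsum
    omega
  -- the bijection
  set f : (Fin 7 ⊕ Fin 7) → ZMod 14 := Sum.elim
    (fun i => if i = b then 0 else if i = a1 then 2 else if i = a2 then 10
        else if i = c1 then 12 else if i = c2 then 8 else if i = d1 then 4 else 6)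
    (fun j => if j = j1 then 1 else if j = j2 then 13 else if j = j3 then 5
        else if j = za then 3 else if j = zb then 7 else if j = zc then 11 else 9)
    with hfdef
  have hfb : f (Sum.inl b) = 0 := by
    simp only [hfdef, Sum.elim_inl]; rw [if_pos trivial]
  have hfa1 : f (Sum.inl a1) = 2 := by
    simp only [hfdef, Sum.elim_inl]; rw [if_neg ha1b, if_pos trivial]
  have hfa2 : f (Sum.inl a2) = 10 := by
    simp only [hfdef, Sum.elim_inl]; rw [if_neg ha2b, if_neg (Ne.symm ha12), if_pos trivial]
  have hfc1 : f (Sum.inl c1) = 12 := by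
    simp only [hfdef, Sum.elim_inl]
    rw [if_neg hc1b, if_neg (Ne.symm ha1c1), if_neg (Ne.symm ha2c1), if_pos trivial]
  have hfc2 : f (Sum.inl c2) = 8 := by
    simp only [hfdef, Sum.elim_inl]
    rw [if_neg hc2b, if_neg (Ne.symm ha1c2), if_neg (Ne.symm ha2c2),
      if_neg (Ne.symm hc12), if_pos trivial]
  have hfd1 : f (Sum.inl d1) = 4 := by
    simp only [hfdef, Sum.elim_inl]
    rw [if_neg hd1b, if_neg (Ne.symm ha1d1), if_neg (Ne.symm ha2d1),
      if_neg (Ne.symm hc1d1), if_neg (Ne.symm hc2d1), if_pos trivial]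
  have hfd2 : f (Sum.inl d2) = 6 := by
    simp only [hfdef, Sum.elim_inl]
    rw [if_neg hd2b, if_neg (Ne.symm ha1d2), if_neg (Ne.symm ha2d2),
      if_neg (Ne.symm hc1d2), if_neg (Ne.symm hc2d2), if_neg (Ne.symm hd12)]
  have hfj1 : f (Sum.inr j1) = 1 := by
    simp only [hfdef, Sum.elim_inr]; rw [if_pos trivial]
  have hfj2 : f (Sum.inr j2) = 13 := by
    simp only [hfdef, Sum.elim_inr]; rw [if_neg (Ne.symm hj12), if_pos trivial]
  have hfj3 : f (Sum.inr j3) = 5 := by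
    simp only [hfdef, Sum.elim_inr]; rw [if_neg (Ne.symm hj13), if_neg (Ne.symm hj23), if_pos trivial]
  have hfza : f (Sum.inr za) = 3 := by
    simp only [hfdef, Sum.elim_inr]; rw [if_neg hzaj1, if_neg hzaj2, if_neg hzaj3, if_pos trivial]
  have hfzb : f (Sum.inr zb) = 7 := by
    simp only [hfdef, Sum.elim_inr]
    rw [if_neg hzbj1, if_neg hzbj2, if_neg hzbj3, if_neg (Ne.symm hzazb), if_pos trivial]
  have hfzc : f (Sum.inr zc) = 11 := by
    simp only [hfdef, Sum.elim_inr]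
    rw [if_neg hzcj1, if_neg hzcj2, if_neg hzcj3, if_neg hzcza, if_neg hzczb, if_pos trivial]
  have hfzd : f (Sum.inr zd) = 9 := by
    simp only [hfdef, Sum.elim_inr]
    rw [if_neg hzdj1, if_neg hzdj2, if_neg hzdj3, if_neg hzdza, if_neg hzdzb,
      if_neg hzdzc]
  set g : ZMod 14 → (Fin 7 ⊕ Fin 7) := fun z =>
    if z = 0 then Sum.inl b else if z = 2 then Sum.inl a1 else if z = 10 then Sum.inl a2
    else if z = 12 then Sum.inl c1 else if z = 8 then Sum.inl c2 else if z = 4 then Sum.inl d1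
    else if z = 6 then Sum.inl d2
    else if z = 1 then Sum.inr j1 else if z = 13 then Sum.inr j2 else if z = 5 then Sum.inr j3
    else if z = 3 then Sum.inr za else if z = 7 then Sum.inr zb else if z = 11 then Sum.inr zc
    else Sum.inr zd with hgdef
  have hg0 : g 0 = Sum.inl b := by
    rw [hgdef]
    beta_reduce
    rw [if_pos rfl]
  have hg2 : g 2 = Sum.inl a1 := by
    rw [hgdef]
    beta_reduce
    rw [if_neg (by decide), if_pos rfl]
  have hg10 : g 10 = Sum.inl a2 := by
    rw [hgdef]
    beta_reduce
    rw [if_neg (by decide), if_neg (by decide), if_pos rfl]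
  have hg12 : g 12 = Sum.inl c1 := by
    rw [hgdef]
    beta_reduce
    rw [if_neg (by decide), if_neg (by decide), if_neg (by decide), if_pos rfl]
  have hg8 : g 8 = Sum.inl c2 := by
    rw [hgdef]
    beta_reduce
    rw [if_neg (by decide), if_neg (by decide), if_neg (by decide), if_neg (by decide), if_pos rfl]
  have hg4 : g 4 = Sum.inl d1 := by
    rw [hgdef]
    beta_reduce
    rw [if_neg (by decide), if_neg (by decide), if_neg (by decide), if_neg (by decide), if_neg (by decide), if_pos rfl]
  have hg6 : g 6 = Sum.inl d2 := by
    rw [hgdef]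
    beta_reduce
    rw [if_neg (by decide), if_neg (by decide), if_neg (by decide), if_neg (by decide), if_neg (by decide), if_neg (by decide), if_pos rfl]
  have hg1 : g 1 = Sum.inr j1 := by
    rw [hgdef]
    beta_reduce
    rw [if_neg (by decide), if_neg (by decide), if_neg (by decide), if_neg (by decide), if_neg (by decide), if_neg (by decide), if_neg (by decide), if_pos rfl]
  have hg13 : g 13 = Sum.inr j2 := by
    rw [hgdef]
    beta_reduce
    rw [if_neg (by decide), if_neg (by decide), if_neg (by decide), if_neg (by decide), if_neg (by decide), if_neg (by decide), if_neg (by decide), if_neg (by decide), if_pos rfl]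
  have hg5 : g 5 = Sum.inr j3 := by
    rw [hgdef]
    beta_reduce
    rw [if_neg (by decide), if_neg (by decide), if_neg (by decide), if_neg (by decide), if_neg (by decide), if_neg (by decide), if_neg (by decide), if_neg (by decide), if_neg (by decide), if_pos rfl]
  have hg3 : g 3 = Sum.inr za := by
    rw [hgdef]
    beta_reduce
    rw [if_neg (by decide), if_neg (by decide), if_neg (by decide), if_neg (by decide), if_neg (by decide), if_neg (by decide), if_neg (by decide), if_neg (by decide), if_neg (by decide), if_neg (by decide), if_pos rfl]
  have hg7 : g 7 = Sum.inr zb := by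
    rw [hgdef]
    beta_reduce
    rw [if_neg (by decide), if_neg (by decide), if_neg (by decide), if_neg (by decide), if_neg (by decide), if_neg (by decide), if_neg (by decide), if_neg (by decide), if_neg (by decide), if_neg (by decide), if_neg (by decide), if_pos rfl]
  have hg11 : g 11 = Sum.inr zc := by
    rw [hgdef]
    beta_reduce
    rw [if_neg (by decide), if_neg (by decide), if_neg (by decide), if_neg (by decide), if_neg (by decide), if_neg (by decide), if_neg (by decide), if_neg (by decide), if_neg (by decide), if_neg (by decide), if_neg (by decide), if_neg (by decide), if_pos rfl]
  have hg9 : g 9 = Sum.inr zd := by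
    rw [hgdef]
    beta_reduce
    rw [if_neg (by decide), if_neg (by decide), if_neg (by decide), if_neg (by decide), if_neg (by decide), if_neg (by decide), if_neg (by decide), if_neg (by decide), if_neg (by decide), if_neg (by decide), if_neg (by decide), if_neg (by decide), if_neg (by decide)]
  have hgf : Function.LeftInverse g f := by
    intro v
    cases v with
    | inl i =>
      rcases hallA' i with h | h | h | h | h | h | h <;> rw [h]
      · rw [hfb, hg0]
      · rw [hfa1, hg2]
      · rw [hfa2, hg10]
      · rw [hfc1, hg12]
      · rw [hfc2, hg8]
      · rw [hfd1, hg4]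
      · rw [hfd2, hg6]
    | inr j =>
      rcases hallB j with h | h | h | h | h | h | h <;> rw [h]
      · rw [hfj1, hg1]
      · rw [hfj2, hg13]
      · rw [hfj3, hg5]
      · rw [hfza, hg3]
      · rw [hfzb, hg7]
      · rw [hfzc, hg11]
      · rw [hfzd, hg9]
  have hfg : Function.RightInverse g f := by
    intro z
    have hzall : ∀ w : ZMod 14, w = 0 ∨ w = 1 ∨ w = 2 ∨ w = 3 ∨ w = 4 ∨ w = 5 ∨ w = 6 ∨
        w = 7 ∨ w = 8 ∨ w = 9 ∨ w = 10 ∨ w = 11 ∨ w = 12 ∨ w = 13 := by decide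
    have hz := hzall z
    rcases hz with rfl|rfl|rfl|rfl|rfl|rfl|rfl|rfl|rfl|rfl|rfl|rfl|rfl|rfl
    · rw [hg0, hfb]
    · rw [hg1, hfj1]
    · rw [hg2, hfa1]
    · rw [hg3, hfza]
    · rw [hg4, hfd1]
    · rw [hg5, hfj3]
    · rw [hg6, hfd2]
    · rw [hg7, hfzb]
    · rw [hg8, hfc2]
    · rw [hg9, hfzd]
    · rw [hg10, hfa2]
    · rw [hg11, hfzc]
    · rw [hg12, hfc1]
    · rw [hg13, hfj2]
  set eqv : (Fin 7 ⊕ Fin 7) ≃ ZMod 14 := ⟨f, g, hgf, hfg⟩ with heqvdef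
  -- homomorphism property
  have hhomAB : ∀ i j, M i j → heawood.Adj (f (Sum.inl i)) (f (Sum.inr j)) := by
    intro i j h
    rcases hallA' i with h' | h' | h' | h' | h' | h' | h' <;> rw [h'] at h <;> rw [h']
    · rcases (hMbj j).mp h with h'' | h'' | h'' <;> rw [h'', hfb]
      · rw [hfj1]; decide
      · rw [hfj2]; decide
      · rw [hfj3]; decide
    · rcases hrowa1 j h with h'' | h'' | h'' <;> rw [h'', hfa1]
      · rw [hfj1]; decide
      · rw [hfza]; decide
      · rw [hfzb]; decide
    · rcases hrowa2 j h with h'' | h'' | h'' <;> rw [h'', hfa2]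
      · rw [hfj1]; decide
      · rw [hfzc]; decide
      · rw [hfzd]; decide
    · rcases hrowc1 j h with h'' | h'' | h'' <;> rw [h'', hfc1]
      · rw [hfj2]; decide
      · rw [hfza]; decide
      · rw [hfzc]; decide
    · rcases hrowc2 j h with h'' | h'' | h'' <;> rw [h'', hfc2]
      · rw [hfj2]; decide
      · rw [hfzb]; decide
      · rw [hfzd]; decide
    · rcases hrowd1 j h with h'' | h'' | h'' <;> rw [h'', hfd1]
      · rw [hfj3]; decide
      · rw [hfza]; decide
      · rw [hfzd]; decide
    · rcases hrowd2 j h with h'' | h'' | h'' <;> rw [h'', hfd2]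
      · rw [hfj3]; decide
      · rw [hfzb]; decide
      · rw [hfzc]; decide
  have hhom : ∀ u v, H.Adj u v → heawood.Adj (f u) (f v) := by
    intro u v h
    cases u with
    | inl i =>
      cases v with
      | inl k =>
        exfalso
        rcases hbip _ _ (hHG _ _ h) with ⟨_, h2⟩ | ⟨h1, _⟩
        · exact absurd h2 (by simp)
        · exact absurd h1 (by simp)
      | inr j => exact hhomAB i j h
    | inr j =>
      cases v with
      | inl i => exact (hhomAB i j (SimpleGraph.Adj.symm h)).symm
      | inr k =>
        exfalso
        rcases hbip _ _ (hHG _ _ h) with ⟨h1, _⟩ | ⟨_, h2⟩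
        · exact absurd h1 (by simp)
        · exact absurd h2 (by simp)
  have hrev : ∀ u v, heawood.Adj (eqv u) (eqv v) → H.Adj u v :=
    adj_of_hom_card H heawood eqv hhom (by rw [hheacard, hHcard])
  -- the distance
  have hwalk : ∃ p : H.Walk (Sum.inl b) (Sum.inr b'), p.length = 3 := by
    have w1 : H.Adj (Sum.inl b) (Sum.inr j1) := hMbj1
    have w2 : H.Adj (Sum.inr j1) (Sum.inl a1) := SimpleGraph.Adj.symm hMa1j1
    have w2' : H.Adj (Sum.inr j1) (Sum.inl a2) := SimpleGraph.Adj.symm hMa2j1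
    rcases hb'z with h | h | h | h
    · have w3 : H.Adj (Sum.inl a1) (Sum.inr b') := by rw [h]; exact hMa1za
      exact ⟨.cons w1 (.cons w2 (.cons w3 .nil)), rfl⟩
    · have w3 : H.Adj (Sum.inl a1) (Sum.inr b') := by rw [h]; exact hMa1zb
      exact ⟨.cons w1 (.cons w2 (.cons w3 .nil)), rfl⟩
    · have w3 : H.Adj (Sum.inl a2) (Sum.inr b') := by rw [h]; exact hMa2zc
      exact ⟨.cons w1 (.cons w2' (.cons w3 .nil)), rfl⟩
    · have w3 : H.Adj (Sum.inl a2) (Sum.inr b') := by rw [h]; exact hMa2zd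
      exact ⟨.cons w1 (.cons w2' (.cons w3 .nil)), rfl⟩
  have hdist : H.dist (Sum.inl b) (Sum.inr b') = 3 := by
    obtain ⟨p, hp⟩ := hwalk
    have hub : H.dist (Sum.inl b) (Sum.inr b') ≤ 3 := by
      rw [← hp]; exact SimpleGraph.dist_le p
    have hreach : H.Reachable (Sum.inl b) (Sum.inr b') := ⟨p⟩
    have h0 : H.dist (Sum.inl b) (Sum.inr b') ≠ 0 := by
      rw [SimpleGraph.dist_ne_zero_iff_ne_and_reachable]
      exact ⟨by simp, hreach⟩
    have h1 : H.dist (Sum.inl b) (Sum.inr b') ≠ 1 := by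
      intro h
      rw [SimpleGraph.dist_eq_one_iff_adj] at h
      exact hMbb' h
    have h2 : H.dist (Sum.inl b) (Sum.inr b') ≠ 2 := by
      intro h
      obtain ⟨q, hq⟩ := hreach.exists_walk_length_eq_dist
      rw [h] at hq
      cases q with
      | cons h' q' =>
        cases q' with
        | nil => simp at hq
        | cons h'' q'' =>
          cases q'' with
          | nil =>
            rcases hbip _ _ (hHG _ _ h') with ⟨_, hr⟩ | ⟨hr, _⟩
            · rcases hbip _ _ (hHG _ _ h'') with ⟨hl, _⟩ | ⟨_, hl⟩
              · obtain ⟨x, hx⟩ := Sum.isLeft_iff.mp hl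
                rw [hx] at hr
                simp at hr
              · exact absurd hl (by simp)
            · exact absurd hr (by simp)
          | cons h''' q''' => simp at hq
    omega
  refine ⟨⟨⟨eqv, ?_⟩⟩, hdist⟩
  intro u v
  exact ⟨fun h => hrev u v h, fun h => hhom u v h⟩
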